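/- Let C be a triangulated category with a contravariantly finite rigid full subcategory T, and let W be the class of morphisms f such that in any triangle Z → X --f--> Y → ΣZ both connecting morphisms factor through T^⊥. Then W satisfies the two-out-of-six property: for composable morphisms f, g, h, if g∘f and h∘g belong to W, then f, g, h, and h∘g∘f all belong to W. -/

import Mathlib

open CategoryTheory CategoryTheory.Limits CategoryTheory.Pretriangulated

variable {C : Type*} [Category C] [Preadditive C] [HasZeroObject C]
  [HasShift C ℤ] [∀ n : ℤ, Functor.Additive (CategoryTheory.shiftFunctor C n)]
  [Pretriangulated C]

/-- `f` factors through an object of the set `S`. -/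
def FactorsThruSet (S : Set C) {X Y : C} (f : X ⟶ Y) : Prop :=
  ∃ U ∈ S, ∃ (a : X ⟶ U) (b : U ⟶ Y), f = a ≫ b

/-- The right perpendicular subcategory `T^⊥` of a full subcategory `T`. -/
def rperp (T : Set C) : Set C := {Z | ∀ T' ∈ T, ∀ (f : T' ⟶ Z), f = 0}

/-- The class `W` of morphisms whose connecting morphisms in any triangle factor
through `T^⊥`. -/
def Wclass (T : Set C) {X Y : C} (f : X ⟶ Y) : Prop :=
  ∀ (Z : C) (r : Z ⟶ X) (s : Y ⟶ Z⟦(1:ℤ)⟧),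
    (Triangle.mk r f s ∈ distTriang C) →
      FactorsThruSet (rperp T) r ∧ FactorsThruSet (rperp T) s

/-- A subcategory `T` is rigid if `C(T, ΣT) = 0`. -/
def IsRigid (T : Set C) : Prop :=
  ∀ T' ∈ T, ∀ T'' ∈ T, ∀ (f : T' ⟶ (T'' : C)⟦(1:ℤ)⟧), f = 0

/-- A subcategory is contravariantly finite if every object admits a right approximation. -/
def ContravariantlyFinite (T : Set C) : Prop :=
  ∀ X : C, ∃ T₀ ∈ T, ∃ (p : T₀ ⟶ X), ∀ T' ∈ T, ∀ (u : T' ⟶ X), ∃ v : T' ⟶ T₀, v ≫ p = u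

/-- Composites from `T` vanish. -/
def Hzero (T : Set C) {A B : C} (r : A ⟶ B) : Prop :=
  ∀ T' ∈ T, ∀ (u : T' ⟶ A), u ≫ r = 0

set_option linter.unusedSectionVars false in
lemma Hzero_of_factors (T : Set C) {A B : C} (r : A ⟶ B)
    (hf : FactorsThruSet (rperp T) r) : Hzero T r := by
  obtain ⟨U, hU, a, b, rfl⟩ := hf
  intro T' hT' u
  rw [← Category.assoc, hU T' hT' (u ≫ a), zero_comp]

lemma factors_of_Hzero (T : Set C) (hcf : ContravariantlyFinite T) (hrig : IsRigid T)
    {A B : C} (r : A ⟶ B) (hz : Hzero T r) : FactorsThruSet (rperp T) r := by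
  obtain ⟨T₀, hT₀, p, happ⟩ := hcf A
  obtain ⟨U, q, d, hdist⟩ := Pretriangulated.distinguished_cocone_triangle p
  have hpq : p ≫ q = 0 := comp_distTriang_mor_zero₁₂ _ hdist
  have hU : U ∈ rperp T := by
    intro T' hT' m
    have hmd : m ≫ d = 0 := hrig T' hT' T₀ hT₀ (m ≫ d)
    obtain ⟨t, ht⟩ := Triangle.coyoneda_exact₃ _ hdist m hmd
    obtain ⟨v, hv⟩ := happ T' hT' t
    rw [ht, ← hv]
    change (v ≫ p) ≫ q = 0
    rw [Category.assoc, hpq, comp_zero]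
  have hpr : p ≫ r = 0 := hz T₀ hT₀ p
  obtain ⟨r', hr'⟩ := Triangle.yoneda_exact₂ _ hdist r hpr
  exact ⟨U, hU, q, r', hr'⟩

/-- The class `W` is exactly the class of morphisms inverted by the restricted Yoneda
functor to `T`. -/
lemma Wclass_iff (T : Set C) (hcf : ContravariantlyFinite T) (hrig : IsRigid T)
    {X Y : C} (f : X ⟶ Y) :
    Wclass T f ↔ ((∀ T' ∈ T, ∀ (u : T' ⟶ X), u ≫ f = 0 → u = 0) ∧
      (∀ T' ∈ T, ∀ (v : T' ⟶ Y), ∃ u : T' ⟶ X, u ≫ f = v)) := by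
  constructor
  · intro hW
    obtain ⟨Q, a, b, hdist⟩ := Pretriangulated.distinguished_cocone_triangle f
    have hdist' : (Triangle.mk f a b).invRotate ∈ distTriang C :=
      inv_rot_of_distTriang _ hdist
    set Tri := (Triangle.mk f a b).invRotate with hTri
    have hdist'' : Triangle.mk Tri.mor₁ f Tri.mor₃ ∈ distTriang C := hdist'
    obtain ⟨h₁, h₃⟩ := hW _ Tri.mor₁ Tri.mor₃ hdist''
    have hz₁ := Hzero_of_factors T _ h₁
    have hz₃ := Hzero_of_factors T _ h₃
    constructor
    · intro T' hT' u hu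
      obtain ⟨w, hw⟩ := Triangle.coyoneda_exact₂ _ hdist'' u hu
      rw [hw]
      exact hz₁ T' hT' w
    · intro T' hT' v
      have hv : v ≫ Tri.mor₃ = 0 := hz₃ T' hT' v
      obtain ⟨u, hu⟩ := Triangle.coyoneda_exact₃ _ hdist'' v hv
      exact ⟨u, hu.symm⟩
  · rintro ⟨hmono, hepi⟩ Z r s hdist
    have hz₁ : Hzero T r := by
      intro T' hT' w
      have : (w ≫ r) ≫ f = 0 := by
        rw [Category.assoc]
        have : r ≫ f = 0 := comp_distTriang_mor_zero₁₂ _ hdist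
        rw [this, comp_zero]
      exact hmono T' hT' (w ≫ r) this
    have hz₃ : Hzero T s := by
      intro T' hT' v
      obtain ⟨u, hu⟩ := hepi T' hT' v
      have hfs : f ≫ s = 0 := comp_distTriang_mor_zero₂₃ _ hdist
      rw [← hu, Category.assoc, hfs, comp_zero]
    exact ⟨factors_of_Hzero T hcf hrig r hz₁, factors_of_Hzero T hcf hrig s hz₃⟩

/-- The class `W` satisfies the two-out-of-six property. -/
theorem Wclass_two_out_of_six (T : Set C)
    (hcf : ContravariantlyFinite T) (hrig : IsRigid T)
    {X Y Z W : C} (f : X ⟶ Y) (g : Y ⟶ Z) (h : Z ⟶ W)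
    (hgf : Wclass T (f ≫ g)) (hhg : Wclass T (g ≫ h)) :
    Wclass T f ∧ Wclass T g ∧ Wclass T h ∧ Wclass T (f ≫ g ≫ h) := by
  rw [Wclass_iff T hcf hrig] at hgf hhg ⊢
  rw [Wclass_iff T hcf hrig, Wclass_iff T hcf hrig, Wclass_iff T hcf hrig]
  obtain ⟨hgf₁, hgf₂⟩ := hgf
  obtain ⟨hhg₁, hhg₂⟩ := hhg
  -- g is "mono" and "epi"
  have hg₁ : ∀ T' ∈ T, ∀ (u : T' ⟶ Y), u ≫ g = 0 → u = 0 := by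
    intro T' hT' u hu
    exact hhg₁ T' hT' u (by rw [← Category.assoc, hu, zero_comp])
  have hg₂ : ∀ T' ∈ T, ∀ (v : T' ⟶ Z), ∃ u : T' ⟶ Y, u ≫ g = v := by
    intro T' hT' v
    obtain ⟨u, hu⟩ := hgf₂ T' hT' v
    exact ⟨u ≫ f, by rw [Category.assoc]; exact hu⟩
  -- f
  have hf₁ : ∀ T' ∈ T, ∀ (u : T' ⟶ X), u ≫ f = 0 → u = 0 := by
    intro T' hT' u hu
    exact hgf₁ T' hT' u (by rw [← Category.assoc, hu, zero_comp])
  have hf₂ : ∀ T' ∈ T, ∀ (v : T' ⟶ Y), ∃ u : T' ⟶ X, u ≫ f = v := by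
    intro T' hT' v
    obtain ⟨u, hu⟩ := hgf₂ T' hT' (v ≫ g)
    refine ⟨u, ?_⟩
    have : (u ≫ f - v) ≫ g = 0 := by
      rw [Preadditive.sub_comp, Category.assoc, hu, sub_self]
    have := hg₁ T' hT' _ this
    rwa [sub_eq_zero] at this
  -- h
  have hh₁ : ∀ T' ∈ T, ∀ (u : T' ⟶ Z), u ≫ h = 0 → u = 0 := by
    intro T' hT' u hu
    obtain ⟨w, hw⟩ := hg₂ T' hT' u
    have : w = 0 := hhg₁ T' hT' w (by rw [← Category.assoc, hw]; exact hu)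
    rw [← hw, this, zero_comp]
  have hh₂ : ∀ T' ∈ T, ∀ (v : T' ⟶ W), ∃ u : T' ⟶ Z, u ≫ h = v := by
    intro T' hT' v
    obtain ⟨u, hu⟩ := hhg₂ T' hT' v
    exact ⟨u ≫ g, by rw [Category.assoc]; exact hu⟩
  refine ⟨⟨hf₁, hf₂⟩, ⟨hg₁, hg₂⟩, ⟨hh₁, hh₂⟩, ?_, ?_⟩
  · intro T' hT' u hu
    apply hf₁ T' hT' u
    apply hhg₁ T' hT' (u ≫ f)
    rw [Category.assoc]; exact hu
  · intro T' hT' v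
    obtain ⟨u, hu⟩ := hhg₂ T' hT' v
    obtain ⟨u', hu'⟩ := hf₂ T' hT' u
    exact ⟨u', by rw [← hu, ← hu', Category.assoc]⟩
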